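/- Let Σ be a non-negative definite d×d matrix and suppose g : ℝ^d → ℝ is an even function, i.e. g(w) = g(−w) for all w ∈ ℝ^d. Then the solution f of the multivariate normal Stein equation with test function h∘g is an even function. Moreover, for odd k ≥ 1 and any indices i_1,…,i_k ∈ {1,…,d}, provided ∂^k f/(∂w_{i_1}⋯∂w_{i_k}) exists and the expectation is well-defined, E[∂^k f/(∂w_{i_1}⋯∂w_{i_k})(Σ^{1/2}Z)] = 0. -/

import Mathlib

open MeasureTheory ProbabilityTheory Real

noncomputable section

/-- The standard `d`-dimensional Gaussian measure (law of a standard Gaussian random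
vector `Z` in `ℝ^d`). -/
def stdGauss (d : ℕ) : Measure (Fin d → ℝ) := Measure.pi fun _ => gaussianReal 0 1

/-- The non-negative definite square root of a positive semidefinite matrix (as in the
older Mathlib `Matrix.PosSemidef.sqrt`, since removed). -/
def Matrix.PosSemidef.sqrt {n : Type*} [Fintype n] [DecidableEq n]
    {A : Matrix n n ℝ} (hA : A.PosSemidef) : Matrix n n ℝ :=
  (hA.1.eigenvectorUnitary : Matrix n n ℝ) *
    Matrix.diagonal ((↑) ∘ (fun x : ℝ => √x) ∘ hA.1.eigenvalues) *
    (star hA.1.eigenvectorUnitary : Matrix n n ℝ)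

/-- Partial derivative of `f : ℝ^d → ℝ` in the `i`-th coordinate direction. -/
def pd {d : ℕ} (i : Fin d) (f : (Fin d → ℝ) → ℝ) : (Fin d → ℝ) → ℝ :=
  fun w => fderiv ℝ f w (Pi.single i 1)

/-- Iterated partial derivative `∂^n f / (∂w_{i_1} ⋯ ∂w_{i_n})` along a list of
coordinate indices. -/
def pdList {d : ℕ} : List (Fin d) → ((Fin d → ℝ) → ℝ) → ((Fin d → ℝ) → ℝ)
  | [], f => f
  | i :: l, f => pd i (pdList l f)

/-- Stirling number of the second kind `S(n,k)`, as a real number. -/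
def stirl (n k : ℕ) : ℝ :=
  ((k.factorial : ℝ))⁻¹ *
    ∑ j ∈ Finset.range (k + 1), (-1 : ℝ) ^ (k - j) * (k.choose j) * (j : ℝ) ^ n

/-- `h_n = ∑_{k=1}^n S(n,k) ‖h^{(k)}‖_∞`. -/
def hCoef (h : ℝ → ℝ) (n : ℕ) : ℝ :=
  ∑ k ∈ Finset.Icc 1 n, stirl n k * ⨆ x : ℝ, |iteratedDeriv k h x|

/-- The class `C_b^n(ℝ)`: `h` is `n` times differentiable with the derivatives of
order `1,…,n` bounded. -/
def CbClass (n : ℕ) (h : ℝ → ℝ) : Prop :=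
  ContDiff ℝ n h ∧ ∀ k, 1 ≤ k → k ≤ n → ∃ C, ∀ x : ℝ, |iteratedDeriv k h x| ≤ C

/-- The class `C_P^n(ℝ^d)`: all partial derivatives of `g` up to order `n` exist and
`|∂^k g(w)/(∂w_{i_1}⋯∂w_{i_k})|^{n/k} ≤ P w` for all `k = 1,…,n`. -/
def CPClass {d : ℕ} (n : ℕ) (P g : (Fin d → ℝ) → ℝ) : Prop :=
  ContDiff ℝ n g ∧ ∀ k, 1 ≤ k → k ≤ n → ∀ (i : Fin k → Fin d) (w : Fin d → ℝ),
    |pdList (List.ofFn i) g w| ^ ((n : ℝ) / (k : ℝ)) ≤ P w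

/-- The class `C_P^n(ℝ)` (univariate case). -/
def CPClass1 (n : ℕ) (P g : ℝ → ℝ) : Prop :=
  ContDiff ℝ n g ∧ ∀ k, 1 ≤ k → k ≤ n → ∀ w : ℝ,
    |iteratedDeriv k g w| ^ ((n : ℝ) / (k : ℝ)) ≤ P w

end


lemma gauss1_neg : MeasurePreserving (fun x : ℝ => -x) (gaussianReal 0 1) (gaussianReal 0 1) := by
  constructor
  · exact measurable_neg
  · have := gaussianReal_map_const_mul (μ := 0) (v := 1) (-1)
    simpa [neg_one_mul] using this

lemma stdGauss_neg (d : ℕ) :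
    MeasurePreserving (fun z : Fin d → ℝ => -z) (stdGauss d) (stdGauss d) := by
  have := measurePreserving_pi (fun _ : Fin d => gaussianReal 0 1)
    (fun _ : Fin d => gaussianReal 0 1) (f := fun _ x => -x) (fun _ => gauss1_neg)
  exact this

lemma integral_neg_stdGauss {d : ℕ} (F : (Fin d → ℝ) → ℝ) :
    ∫ z, F (-z) ∂(stdGauss d) = ∫ z, F z ∂(stdGauss d) :=
  (stdGauss_neg d).integral_comp (MeasurableEquiv.neg (Fin d → ℝ)).measurableEmbedding F

lemma contDiff_pd {d m : ℕ} {g : (Fin d → ℝ) → ℝ} (i : Fin d)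
    (hg : ContDiff ℝ (m + 1 : ℕ) g) : ContDiff ℝ (m : ℕ) (pd i g) := by
  have h1 : ContDiff ℝ (m : ℕ) (fderiv ℝ g) := hg.fderiv_right (by exact_mod_cast le_refl _)
  exact h1.clm_apply contDiff_const

lemma pd_neg {d : ℕ} {g : (Fin d → ℝ) → ℝ} (hg : Differentiable ℝ g) (i : Fin d)
    (ε : ℝ) (hε : ∀ w, g (-w) = ε * g w) (w : Fin d → ℝ) :
    pd i g (-w) = -ε * pd i g w := by
  have hneg : HasFDerivAt (fun x : Fin d → ℝ => -x)
      (-(ContinuousLinearMap.id ℝ (Fin d → ℝ))) w := (hasFDerivAt_id w).neg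
  have H1 : HasFDerivAt (fun x => g (-x))
      ((fderiv ℝ g (-w)).comp (-(ContinuousLinearMap.id ℝ (Fin d → ℝ)))) w :=
    ((hg (-w)).hasFDerivAt).comp w hneg
  have H2 : HasFDerivAt (fun x => g (-x)) (ε • fderiv ℝ g w) w := by
    have : HasFDerivAt (fun x => ε * g x) (ε • fderiv ℝ g w) w :=
      ((hg w).hasFDerivAt).const_mul ε
    simpa only [← hε] using this
  have := H1.unique H2
  have happ := congrArg (fun L : (Fin d → ℝ) →L[ℝ] ℝ => L (Pi.single i 1)) this
  simp only [ContinuousLinearMap.comp_apply, ContinuousLinearMap.neg_apply,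
    ContinuousLinearMap.id_apply, ContinuousLinearMap.smul_apply, map_neg,
    smul_eq_mul] at happ
  simp only [pd]
  linarith

lemma pdList_props {d k : ℕ} {f : (Fin d → ℝ) → ℝ} (hf : ContDiff ℝ (k : ℕ) f)
    (hfe : ∀ w, f (-w) = f w) :
    ∀ L : List (Fin d), L.length ≤ k →
      ContDiff ℝ ((k - L.length : ℕ)) (pdList L f) ∧
      ∀ w, pdList L f (-w) = (-1 : ℝ) ^ L.length * pdList L f w := by
  intro L
  induction L with
  | nil => intro _; exact ⟨by simpa [pdList] using hf, fun w => by simpa [pdList] using hfe w⟩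
  | cons i L ih =>
    intro hlen
    have hlen' : L.length ≤ k := by simpa using hlen.trans' (by simp)
    obtain ⟨hC, hE⟩ := ih hlen'
    have hkey : k - L.length = (k - (L.length + 1)) + 1 := by
      simp at hlen; omega
    rw [hkey] at hC
    have hdiff : Differentiable ℝ (pdList L f) :=
      hC.differentiable (by simp)
    refine ⟨?_, ?_⟩
    · simpa [pdList] using contDiff_pd i hC
    · intro w
      have := pd_neg hdiff i ((-1 : ℝ) ^ L.length) hE w
      simpa [pdList, pow_succ] using this.trans (by ring)

/-- Lemma 3.2: if `g` is an even function, the solution `f` of the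
multivariate normal Stein equation with test function `h ∘ g` is even, and for odd `k`
the expectation of any `k`-th order partial derivative of `f` at `Σ^{1/2}Z` vanishes
(provided the derivative exists and the expectation is well-defined). -/
theorem steinSol_even_and_odd_partial_expectation_zero {d : ℕ}
    (S : Matrix (Fin d) (Fin d) ℝ) (hS : S.PosSemidef)
    (h : ℝ → ℝ) (g : (Fin d → ℝ) → ℝ) (hg : ∀ w, g (-w) = g w)
    (f : (Fin d → ℝ) → ℝ)
    (hf : ∀ w, f w = -∫ s in Set.Ioi (0 : ℝ),
      ((∫ z, h (g (Real.exp (-s) • w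
            + Real.sqrt (1 - Real.exp (-2 * s)) • hS.sqrt.mulVec z)) ∂(stdGauss d))
        - ∫ z, h (g (hS.sqrt.mulVec z)) ∂(stdGauss d))) :
    (∀ w, f (-w) = f w) ∧
      ∀ (k : ℕ), Odd k → 1 ≤ k → ∀ i : Fin k → Fin d,
        ContDiff ℝ k f →
        Integrable (fun z => pdList (List.ofFn i) f (hS.sqrt.mulVec z)) (stdGauss d) →
        ∫ z, pdList (List.ofFn i) f (hS.sqrt.mulVec z) ∂(stdGauss d) = 0 := by
  have hfe : ∀ w, f (-w) = f w := by
    intro w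
    rw [hf (-w), hf w]
    congr 1
    refine integral_congr_ae (Filter.Eventually.of_forall fun s => ?_)
    dsimp only
    congr 1
    rw [← integral_neg_stdGauss (fun z => h (g (Real.exp (-s) • w
        + Real.sqrt (1 - Real.exp (-2 * s)) • hS.sqrt.mulVec z)))]
    congr 1
    funext z
    congr 1
    rw [← hg (Real.exp (-s) • w + Real.sqrt (1 - Real.exp (-2 * s)) • hS.sqrt.mulVec (-z))]
    congr 1
    simp only [Matrix.mulVec_neg, smul_neg, neg_add, neg_neg]
  refine ⟨hfe, fun k hk hk1 i hCf hint => ?_⟩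
  have hlen : (List.ofFn i).length = k := List.length_ofFn
  obtain ⟨_, hE⟩ := pdList_props hCf hfe (List.ofFn i) (by rw [hlen])
  have hodd : ∀ w, pdList (List.ofFn i) f (-w) = -pdList (List.ofFn i) f w := by
    intro w
    rw [hE w, hlen, hk.neg_one_pow, neg_one_mul]
  have h1 : ∫ z, pdList (List.ofFn i) f (hS.sqrt.mulVec z) ∂(stdGauss d)
      = -∫ z, pdList (List.ofFn i) f (hS.sqrt.mulVec z) ∂(stdGauss d) := by
    conv_lhs => rw [← integral_neg_stdGauss (fun z => pdList (List.ofFn i) f (hS.sqrt.mulVec z))]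
    rw [← integral_neg]
    congr 1
    funext z
    rw [Matrix.mulVec_neg, hodd]
  linarith
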